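/- Let r_1, r_2 ≥ 2 be integers, and suppose that for i = 1, 2 the bound χ(KG^{r_i}(n,k,s)) ≥ ⌈(n - r_i(k-s-1))/(r_i-1)⌉ holds for all integers n, k, s with n ≥ r_i(k-1)+1 and k > s ≥ 0. Then for all n ≥ r_1 r_2 (k-1)+1 and k > s ≥ 0, χ(KG^{r_1 r_2}(n,k,s)) ≥ ⌈(n - r_1 r_2 (k-s-1))/(r_1 r_2 - 1)⌉. -/

import Mathlib

/-- `E` is an edge of the generalized Kneser hypergraph `KG^r(n,k,s)`. -/
def KGEdge (r n k s : ℕ) (E : Finset (Finset (Fin n))) : Prop :=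
  E.card = r ∧ (∀ A ∈ E, A.card = k) ∧
    ∀ A ∈ E, ∀ B ∈ E, A ≠ B → (A ∩ B).card ≤ s

/-- `c` is a proper coloring of `KG^r(n,k,s)` with `C` colors. -/
def KGProper (r n k s C : ℕ) (c : Finset (Fin n) → Fin C) : Prop :=
  ∀ E : Finset (Finset (Fin n)), KGEdge r n k s E → ¬ ∃ i : Fin C, ∀ A ∈ E, c A = i

/-- The bound `χ(KG^r(n,k,s)) ≥ ⌈(n - r(k-s-1))/(r-1)⌉` holds for `r`
(for all admissible `n, k, s`). -/
def KGBound (r : ℕ) : Prop :=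
  ∀ n k s : ℕ, r * (k - 1) + 1 ≤ n → s < k →
    ∀ C : ℕ, ∀ c : Finset (Fin n) → Fin C, KGProper r n k s C c →
      ⌈((n : ℚ) - (r : ℚ) * ((k : ℚ) - (s : ℚ) - 1)) / ((r : ℚ) - 1)⌉ ≤ (C : ℤ)

/-- `Finset.map` as an embedding of finsets. -/
def finsetMapEmb {α β : Type*} (f : α ↪ β) : Finset α ↪ Finset β :=
  ⟨fun A => A.map f, fun A B h => Finset.map_injective f h⟩

@[simp] lemma finsetMapEmb_apply {α β : Type*} (f : α ↪ β) (A : Finset α) :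
    finsetMapEmb f A = A.map f := rfl

/-- Mapping an edge along an injection of ground sets gives an edge. -/
lemma kg_edge_map {m n r k s : ℕ} (f : Fin m ↪ Fin n) {E : Finset (Finset (Fin m))}
    (hE : KGEdge r m k s E) : KGEdge r n k s (E.map (finsetMapEmb f)) := by
  obtain ⟨h1, h2, h3⟩ := hE
  refine ⟨by rw [Finset.card_map]; exact h1, ?_, ?_⟩
  · intro A hA
    rw [Finset.mem_map] at hA
    obtain ⟨B, hB, rfl⟩ := hA
    rw [finsetMapEmb_apply, Finset.card_map]
    exact h2 B hB
  · intro A hA B hB hne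
    rw [Finset.mem_map] at hA hB
    obtain ⟨A', hA', rfl⟩ := hA
    obtain ⟨B', hB', rfl⟩ := hB
    rw [finsetMapEmb_apply, finsetMapEmb_apply, ← Finset.map_inter, Finset.card_map]
    exact h3 A' hA' B' hB' (fun h => hne (by rw [h]))

/-- Arithmetic contradiction for the case `C < s`. -/
lemma kg_arith (P n k s C : ℕ) (hP4 : 4 ≤ P) (hn : P * (k - 1) + 1 ≤ n) (hs : s < k)
    (hCs : C < s) (hfin : n - s ≤ C * (P - 1) + P * (k - s - 1)) : False := by
  have hsplit : P * (k - 1) = P * (k - s - 1) + P * s := by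
    have h : k - 1 = (k - s - 1) + s := by omega
    rw [h, Nat.mul_add]
  rw [hsplit] at hn
  have hmul : C * (P - 1) + (P - 1) ≤ s * (P - 1) := by
    calc C * (P - 1) + (P - 1) = (C + 1) * (P - 1) := by ring
    _ ≤ s * (P - 1) := Nat.mul_le_mul_right (P - 1) (by omega)
  have hPs : P * s = s * (P - 1) + s := by
    calc P * s = (P - 1 + 1) * s := by rw [Nat.sub_add_cancel (by omega)]
    _ = s * (P - 1) + s := by ring
  have hfin' : n ≤ C * (P - 1) + P * (k - s - 1) + s := by omega
  have key : ∀ x y z w n' : ℕ, x + (P - 1) ≤ y → w = y + s → z + w + 1 ≤ n' →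
      n' ≤ x + z + s → False := by
    intro x y z w n' h1 h2 h3 h4
    omega
  exact key (C * (P - 1)) (s * (P - 1)) (P * (k - s - 1)) (P * s) n hmul hPs hn hfin'

/-- The main combinatorial step: the AFL product argument, valid when `s ≤ C`. -/
lemma kg_lemA (p q : ℕ) (hp : 2 ≤ p) (hq : 2 ≤ q) (hb1 : KGBound p) (hb2 : KGBound q)
    (n k s C : ℕ) (c : Finset (Fin n) → Fin C) (hn : p * q * (k - 1) + 1 ≤ n)
    (hs : s < k) (hsC : s ≤ C) (hc : KGProper (p * q) n k s C c) :
    n ≤ C * (p * q - 1) + p * q * (k - s - 1) := by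
  by_contra hcon
  push_neg at hcon
  rcases Nat.eq_zero_or_pos C with hC0 | hC1
  · subst hC0; exact (c ∅).elim0
  set a := k - s - 1 with ha
  have hk : k = a + s + 1 := by omega
  set X := max (q * s) (C * (q - 1)) with hX
  set K := X + q * a + 1 with hK
  have hq1 : q - 1 + 1 = q := by omega
  have hp1 : p - 1 + 1 = p := by omega
  have hk1 : k - 1 = a + s := by omega
  -- `q*(k-1)+1 ≤ K`
  have hKk : q * (k - 1) + 1 ≤ K := by
    rw [hk1, hK, Nat.mul_add]
    have : q * s ≤ X := le_max_left _ _
    omega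
  have hkK : k ≤ K := by
    calc k = 1 * (k - 1) + 1 := by omega
    _ ≤ q * (k - 1) + 1 := by
        have := Nat.mul_le_mul_right (k - 1) (show 1 ≤ q by omega); omega
    _ ≤ K := hKk
  have hsK : s < K := lt_of_lt_of_le hs hkK
  -- `p*(K-1)+1 ≤ n`
  have hpK : p * (K - 1) + 1 ≤ n := by
    have hK1 : K - 1 = X + q * a := by omega
    rw [hK1, Nat.mul_add]
    rcases max_choice (q * s) (C * (q - 1)) with h | h
    · -- X = q*s : use `hn`
      rw [← hX] at h
      rw [h]
      have : p * q * (k - 1) = p * (q * s) + p * (q * a) := by rw [hk1]; ring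
      rw [this] at hn
      have : p * (q * a) = p * q * a := by ring
      omega
    · -- X = C*(q-1) : use `hcon`
      rw [← hX] at h
      rw [h]
      have h1 : p * (C * (q - 1)) + p * (q * a) + 1 ≤ C * (p * q - 1) + p * q * a + 1 := by
        have e1 : p * (C * (q - 1)) + C ≤ C * (p * q - 1) + C := by
          have : p * (C * (q - 1)) + C = C * (p * (q - 1) + 1) := by ring
          rw [this]
          have : C * (p * q - 1) + C = C * (p * q - 1 + 1) := by ring
          rw [this]
          apply Nat.mul_le_mul_left
          have : p * (q - 1) + p = p * q := by
            calc p * (q - 1) + p = p * (q - 1 + 1) := by ring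
            _ = p * q := by rw [hq1]
          omega
        have : p * (q * a) = p * q * a := by ring
        omega
      calc p * (C * (q - 1)) + p * (q * a) + 1 ≤ C * (p * q - 1) + p * q * a + 1 := h1
      _ ≤ n := by
          rw [ha] at hcon ⊢
          omega
  -- Step 1: every `K`-subset contains a monochromatic `q`-edge
  have step1 : ∀ Y : Finset (Fin n), Y.card = K →
      ∃ F : Finset (Finset (Fin n)), ∃ i : Fin C,
        KGEdge q n k s F ∧ (∀ A ∈ F, A ⊆ Y) ∧ (∀ A ∈ F, c A = i) := by
    intro Y hY
    set f := Y.orderEmbOfFin hY with hf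
    set cY : Finset (Fin K) → Fin C := fun A => c (A.map f.toEmbedding) with hcY
    have himp : ¬ KGProper q K k s C cY := by
      intro hprop
      have hle := hb2 K k s hKk hs C cY hprop
      have hlt : (C : ℤ) < ⌈((K : ℚ) - (q : ℚ) * ((k : ℚ) - (s : ℚ) - 1)) / ((q : ℚ) - 1)⌉ := by
        rw [Int.lt_ceil]
        rw [lt_div_iff₀ (by
          have : (2 : ℚ) ≤ (q : ℚ) := by exact_mod_cast hq
          linarith)]
        have hkQ : (k : ℚ) = (a : ℚ) + (s : ℚ) + 1 := by exact_mod_cast hk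
        have hKQ : (K : ℚ) = (X : ℚ) + (q : ℚ) * (a : ℚ) + 1 := by
          rw [hK]; push_cast; ring
        have hXQ : (C : ℚ) * ((q : ℚ) - 1) ≤ (X : ℚ) := by
          have h1 : C * (q - 1) ≤ X := le_max_right _ _
          have h2 : ((C * (q - 1) : ℕ) : ℚ) ≤ (X : ℚ) := by exact_mod_cast h1
          have h3 : ((q - 1 : ℕ) : ℚ) = (q : ℚ) - 1 := by
            have : (1 : ℕ) ≤ q := by omega
            push_cast [this]; ring
          push_cast [h3] at h2
          linarith
        push_cast
        rw [hkQ]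
        linarith [hXQ]
      omega
    rw [KGProper] at himp
    push_neg at himp
    obtain ⟨E, hE, i, hmono⟩ := himp
    refine ⟨E.map (finsetMapEmb f.toEmbedding), i, kg_edge_map _ hE, ?_, ?_⟩
    · intro A hA
      rw [Finset.mem_map] at hA
      obtain ⟨B, hB, rfl⟩ := hA
      rw [finsetMapEmb_apply]
      intro x hx
      rw [Finset.mem_map] at hx
      obtain ⟨y, hy, rfl⟩ := hx
      exact Y.orderEmbOfFin_mem hY y
    · intro A hA
      rw [Finset.mem_map] at hA
      obtain ⟨B, hB, rfl⟩ := hA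
      rw [finsetMapEmb_apply]
      exact hmono B hB
  choose F idx hF1 hF2 hF3 using step1
  set c' : Finset (Fin n) → Fin C := fun Y =>
    if h : Y.card = K then idx Y h else ⟨0, hC1⟩ with hc'def
  have hc' : KGProper p n K s C c' := by
    rintro E hE ⟨i, hi⟩
    have hYK : ∀ Y ∈ E, Y.card = K := hE.2.1
    set G := E.attach.biUnion (fun Y => F Y.1 (hYK Y.1 Y.2)) with hG
    have hdisj : ∀ Y₁ : {x // x ∈ E}, ∀ Y₂ : {x // x ∈ E}, Y₁ ≠ Y₂ →
        Disjoint (F Y₁.1 (hYK Y₁.1 Y₁.2)) (F Y₂.1 (hYK Y₂.1 Y₂.2)) := by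
      intro Y₁ Y₂ hne
      rw [Finset.disjoint_left]
      intro A hA1 hA2
      have hsub1 := hF2 Y₁.1 (hYK Y₁.1 Y₁.2) A hA1
      have hsub2 := hF2 Y₂.1 (hYK Y₂.1 Y₂.2) A hA2
      have hYne : Y₁.1 ≠ Y₂.1 := fun h => hne (Subtype.ext h)
      have hint := hE.2.2 Y₁.1 Y₁.2 Y₂.1 Y₂.2 hYne
      have hAk : A.card = k := (hF1 Y₁.1 (hYK Y₁.1 Y₁.2)).2.1 A hA1
      have : A ⊆ Y₁.1 ∩ Y₂.1 := Finset.subset_inter hsub1 hsub2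
      have := Finset.card_le_card this
      omega
    have hGedge : KGEdge (p * q) n k s G := by
      refine ⟨?_, ?_, ?_⟩
      · rw [hG, Finset.card_biUnion (fun Y₁ h1 Y₂ h2 hne => hdisj Y₁ Y₂ hne)]
        have : ∀ Y ∈ E.attach, (F Y.1 (hYK Y.1 Y.2)).card = q := by
          intro Y _
          exact (hF1 Y.1 (hYK Y.1 Y.2)).1
        rw [Finset.sum_congr rfl this, Finset.sum_const, Finset.card_attach, hE.1,
          smul_eq_mul]
      · intro A hA
        rw [hG, Finset.mem_biUnion] at hA
        obtain ⟨Y, _, hAY⟩ := hA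
        exact (hF1 Y.1 (hYK Y.1 Y.2)).2.1 A hAY
      · intro A hA B hB hne
        rw [hG, Finset.mem_biUnion] at hA hB
        obtain ⟨Y₁, _, hA1⟩ := hA
        obtain ⟨Y₂, _, hB2⟩ := hB
        by_cases hYY : Y₁ = Y₂
        · subst hYY
          exact (hF1 Y₁.1 (hYK Y₁.1 Y₁.2)).2.2 A hA1 B hB2 hne
        · have hYne : Y₁.1 ≠ Y₂.1 := fun h => hYY (Subtype.ext h)
          have hint := hE.2.2 Y₁.1 Y₁.2 Y₂.1 Y₂.2 hYne
          have hsub1 := hF2 Y₁.1 (hYK Y₁.1 Y₁.2) A hA1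
          have hsub2 := hF2 Y₂.1 (hYK Y₂.1 Y₂.2) B hB2
          have : A ∩ B ⊆ Y₁.1 ∩ Y₂.1 := Finset.inter_subset_inter hsub1 hsub2
          exact le_trans (Finset.card_le_card this) hint
    refine hc G hGedge ⟨i, ?_⟩
    intro A hA
    rw [hG, Finset.mem_biUnion] at hA
    obtain ⟨Y, _, hAY⟩ := hA
    have h1 : c A = idx Y.1 (hYK Y.1 Y.2) := hF3 Y.1 (hYK Y.1 Y.2) A hAY
    have h2 : c' Y.1 = idx Y.1 (hYK Y.1 Y.2) := by
      rw [hc'def]; simp only [hYK Y.1 Y.2, dif_pos]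
    rw [h1, ← h2]
    exact hi Y.1 Y.2
  -- Apply the bound for `p` to `c'`
  have hle := hb1 n K s hpK hsK C c' hc'
  rw [Int.ceil_le] at hle
  have hppos : (0 : ℚ) < (p : ℚ) - 1 := by
    have : (2 : ℚ) ≤ (p : ℚ) := by exact_mod_cast hp
    linarith
  rw [div_le_iff₀ hppos] at hle
  push_cast at hle
  -- now derive the contradiction
  have hKQ : (K : ℚ) = (X : ℚ) + (q : ℚ) * (a : ℚ) + 1 := by rw [hK]; push_cast; ring
  have hconQ : (C : ℚ) * ((p : ℚ) * (q : ℚ) - 1) + (p : ℚ) * (q : ℚ) * (a : ℚ) + 1 ≤ (n : ℚ) := by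
    have e : C * (p * q - 1) + C = C * (p * q) := by
      have : p * q - 1 + 1 = p * q := by
        have : 1 ≤ p * q := Nat.one_le_iff_ne_zero.mpr (by positivity)
        omega
      calc C * (p * q - 1) + C = C * (p * q - 1 + 1) := by ring
      _ = C * (p * q) := by rw [this]
    have h2 : C * (p * q - 1) + p * q * a + 1 ≤ n := hcon
    have h3 : C * (p * q) + p * q * a + 1 ≤ n + C := by omega
    have h4 : ((C * (p * q) + p * q * a + 1 : ℕ) : ℚ) ≤ ((n + C : ℕ) : ℚ) := by
      exact_mod_cast h3
    push_cast at h4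
    linarith
  have hXcases := max_choice (q * s) (C * (q - 1))
  rw [← hX] at hXcases
  have hq1Q : ((q - 1 : ℕ) : ℚ) = (q : ℚ) - 1 := by
    have : (1 : ℕ) ≤ q := by omega
    push_cast [this]; ring
  have hspos : (0 : ℚ) ≤ (s : ℚ) := by positivity
  have hsCQ : (s : ℚ) ≤ (C : ℚ) := by exact_mod_cast hsC
  have hqQ : (2 : ℚ) ≤ (q : ℚ) := by exact_mod_cast hq
  have hpQ : (2 : ℚ) ≤ (p : ℚ) := by exact_mod_cast hp
  clear hc hc' hF1 hF2 hF3 hc'def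
  clear c' F idx c
  rcases hXcases with hXv | hXv
  · have hXQ : (X : ℚ) = (q : ℚ) * (s : ℚ) := by exact_mod_cast hXv
    rw [hKQ, hXQ] at hle
    have hhint : (p : ℚ) * ((q : ℚ) - 1) * (s : ℚ) ≤ (p : ℚ) * ((q : ℚ) - 1) * (C : ℚ) := by
      apply mul_le_mul_of_nonneg_left hsCQ
      apply mul_nonneg (by linarith) (by linarith)
    linarith [hle, hconQ, hhint]
  · have hXQ : (X : ℚ) = (C : ℚ) * ((q : ℚ) - 1) := by
      have h2 : ((X : ℕ) : ℚ) = ((C * (q - 1) : ℕ) : ℚ) := by exact_mod_cast hXv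
      rw [h2]; push_cast [hq1Q]; ring
    rw [hKQ, hXQ] at hle
    have hhint : (0 : ℚ) ≤ (p : ℚ) * (s : ℚ) := by positivity
    linarith [hle, hconQ, hhint]

/-- Reduction lemma: if the lower bound holds for `r₁` and for `r₂`
(with `r₁, r₂ ≥ 2`), then it holds for `r₁ * r₂`. -/
theorem kneser_bound_mul (r₁ r₂ : ℕ) (h1 : 2 ≤ r₁) (h2 : 2 ≤ r₂)
    (hb1 : KGBound r₁) (hb2 : KGBound r₂) : KGBound (r₁ * r₂) := by
  intro n k s hn hs C c hc
  rcases le_or_gt s C with hsC | hCs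
  · -- direct application of the main lemma
    have hmain := kg_lemA r₁ r₂ h1 h2 hb1 hb2 n k s C c hn hs hsC hc
    rw [Int.ceil_le]
    have hppos : (0 : ℚ) < ((r₁ : ℚ) * (r₂ : ℚ)) - 1 := by
      have h4 : (4 : ℕ) ≤ r₁ * r₂ := by
        calc (4:ℕ) = 2*2 := by norm_num
        _ ≤ r₁ * r₂ := Nat.mul_le_mul h1 h2
      have : (4 : ℚ) ≤ ((r₁ * r₂ : ℕ) : ℚ) := by exact_mod_cast h4
      push_cast at this
      linarith
    push_cast
    rw [div_le_iff₀ hppos]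
    have hk : k = (k - s - 1) + s + 1 := by omega
    set a := k - s - 1 with ha
    have hmain' : n + C ≤ C * (r₁ * r₂) + r₁ * r₂ * a := by
      have h4 : 1 ≤ r₁ * r₂ := Nat.one_le_iff_ne_zero.mpr (by positivity)
      have e : C * (r₁ * r₂ - 1) + C = C * (r₁ * r₂) := by
        calc C * (r₁ * r₂ - 1) + C = C * (r₁ * r₂ - 1 + 1) := by ring
        _ = C * (r₁ * r₂) := by rw [Nat.sub_add_cancel h4]
      omega
    have hQ : (n : ℚ) + (C : ℚ) ≤ (C : ℚ) * ((r₁ : ℚ) * (r₂ : ℚ)) + (r₁ : ℚ) * (r₂ : ℚ) * (a : ℚ) := by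
      exact_mod_cast hmain'
    have hkQ : (k : ℚ) = (a : ℚ) + (s : ℚ) + 1 := by exact_mod_cast hk
    rw [hkQ]
    linarith
  · -- case `C < s`: no proper coloring exists at all (core reduction to `s = 0`)
    exfalso
    have hsn : s ≤ n := by
      have hk1 : k ≤ r₁ * r₂ * (k - 1) + 1 := by
        have h4 : 1 ≤ r₁ * r₂ := Nat.one_le_iff_ne_zero.mpr (by positivity)
        have := Nat.mul_le_mul_right (k - 1) h4
        omega
      omega
    -- embedding of `Fin (n - s)` into `Fin n` and the extra core `S`
    set emb1 : Fin (n - s) ↪ Fin n :=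
      ⟨fun x => ⟨x.val, lt_of_lt_of_le x.isLt (Nat.sub_le n s)⟩, by
        intro x y hxy
        simp only [Fin.mk.injEq] at hxy
        exact Fin.ext hxy⟩ with hemb1
    have hemb1val : ∀ x : Fin (n - s), (emb1 x).val = x.val := fun x => rfl
    set embS : Fin s ↪ Fin n :=
      ⟨fun i => ⟨n - s + i.val, by omega⟩, by
        intro x y hxy
        have : n - s + x.val = n - s + y.val := congrArg Fin.val hxy
        exact Fin.ext (by omega)⟩ with hembS
    set S : Finset (Fin n) := Finset.univ.map embS with hS
    have hScard : S.card = s := by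
      rw [hS, Finset.card_map, Finset.card_univ, Fintype.card_fin]
    have hSval : ∀ x ∈ S, n - s ≤ x.val := by
      intro x hx
      rw [hS, Finset.mem_map] at hx
      obtain ⟨y, _, rfl⟩ := hx
      exact Nat.le_add_right (n - s) y.val
    have hdisjS : ∀ A : Finset (Fin (n - s)), Disjoint (A.map emb1) S := by
      intro A
      rw [Finset.disjoint_left]
      intro x hx hxS
      rw [Finset.mem_map] at hx
      obtain ⟨y, _, rfl⟩ := hx
      have h1 := hSval _ hxS
      have h2 : (emb1 y).val < n - s := by rw [hemb1val]; exact y.isLt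
      omega
    set g : Finset (Fin (n - s)) → Finset (Fin n) := fun A => A.map emb1 ∪ S with hg
    have hginj : Function.Injective g := by
      intro A B hAB
      have h1 : A.map emb1 = B.map emb1 := by
        have e1 : A.map emb1 = g A \ S := by
          rw [hg]; exact (Finset.union_sdiff_cancel_right (hdisjS A)).symm
        have e2 : B.map emb1 = g B \ S := by
          rw [hg]; exact (Finset.union_sdiff_cancel_right (hdisjS B)).symm
        rw [e1, e2, hAB]
      exact Finset.map_injective emb1 h1
    set ct : Finset (Fin (n - s)) → Fin C := fun A => c (g A) with hct
    have hprop : KGProper (r₁ * r₂) (n - s) (k - s) 0 C ct := by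
      rintro E hE ⟨i, hi⟩
      set E' : Finset (Finset (Fin n)) := E.map ⟨g, hginj⟩ with hE'
      have hE'edge : KGEdge (r₁ * r₂) n k s E' := by
        refine ⟨by rw [hE', Finset.card_map]; exact hE.1, ?_, ?_⟩
        · intro A hA
          rw [hE', Finset.mem_map] at hA
          obtain ⟨B, hB, rfl⟩ := hA
          show (g B).card = k
          rw [hg]
          rw [Finset.card_union_of_disjoint (hdisjS B), Finset.card_map, hScard,
            hE.2.1 B hB]
          omega
        · intro A hA B hB hne
          rw [hE', Finset.mem_map] at hA hB
          obtain ⟨A', hA', rfl⟩ := hA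
          obtain ⟨B', hB', rfl⟩ := hB
          have hne' : A' ≠ B' := fun h => hne (by rw [h])
          have hint := hE.2.2 A' hA' B' hB' hne'
          have hempty : A' ∩ B' = ∅ := Finset.card_eq_zero.mp (Nat.le_zero.mp hint)
          have hsub : (Function.Embedding.mk g hginj A') ∩ (Function.Embedding.mk g hginj B') ⊆ S := by
            intro x hx
            rw [Finset.mem_inter] at hx
            obtain ⟨hx1, hx2⟩ := hx
            show x ∈ S
            have hx1' : x ∈ A'.map emb1 ∪ S := hx1
            have hx2' : x ∈ B'.map emb1 ∪ S := hx2
            rw [Finset.mem_union] at hx1' hx2'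
            rcases hx1' with h | h
            · rcases hx2' with h' | h'
              · exfalso
                rw [Finset.mem_map] at h h'
                obtain ⟨y, hy, rfl⟩ := h
                obtain ⟨y', hy', hyy⟩ := h'
                have : y' = y := emb1.injective hyy
                subst this
                have : y' ∈ A' ∩ B' := Finset.mem_inter.mpr ⟨hy, hy'⟩
                rw [hempty] at this
                exact absurd this (Finset.notMem_empty _)
              · exact h'
            · exact h
          calc ((Function.Embedding.mk g hginj A') ∩ (Function.Embedding.mk g hginj B')).card
              ≤ S.card := Finset.card_le_card hsub
          _ = s := hScard
      refine hc E' hE'edge ⟨i, ?_⟩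
      intro A hA
      rw [hE', Finset.mem_map] at hA
      obtain ⟨B, hB, rfl⟩ := hA
      exact hi B hB
    -- apply the main lemma with `s = 0`
    have hs' : 0 < k - s := by omega
    have hn' : r₁ * r₂ * (k - s - 1) + 1 ≤ n - s := by
      have hsplit : r₁ * r₂ * (k - 1) = r₁ * r₂ * (k - s - 1) + r₁ * r₂ * s := by
        have : k - 1 = (k - s - 1) + s := by omega
        rw [this, Nat.mul_add]
      have h4 : 1 ≤ r₁ * r₂ := Nat.one_le_iff_ne_zero.mpr (by positivity)
      have := Nat.mul_le_mul_left s h4  -- s*1 ≤ s*(r₁r₂)? careful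
      have hsr : s ≤ r₁ * r₂ * s := by
        calc s = 1 * s := (Nat.one_mul s).symm
        _ ≤ r₁ * r₂ * s := Nat.mul_le_mul_right s h4
      omega
    have hmain := kg_lemA r₁ r₂ h1 h2 hb1 hb2 (n - s) (k - s) 0 C ct hn' hs'
      (Nat.zero_le C) hprop
    -- hmain : n - s ≤ C * (r₁ * r₂ - 1) + r₁ * r₂ * (k - s - 0 - 1)
    have hfin : n - s ≤ C * (r₁ * r₂ - 1) + r₁ * r₂ * (k - s - 1) := by
      have : k - s - 0 - 1 = k - s - 1 := by omega
      rwa [this] at hmain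
    -- contradiction: n ≥ r₁r₂(k-1)+1 = r₁r₂(k-s-1) + r₁r₂ s + 1 and C < s
    have hsplit : r₁ * r₂ * (k - 1) = r₁ * r₂ * (k - s - 1) + r₁ * r₂ * s := by
      have : k - 1 = (k - s - 1) + s := by omega
      rw [this, Nat.mul_add]
    exact kg_arith (r₁ * r₂) n k s C
      (by calc (4:ℕ) = 2*2 := by norm_num
          _ ≤ r₁ * r₂ := Nat.mul_le_mul h1 h2)
      hn hs hCs hfin
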